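/- For every integer n ≥ 2 and all complex numbers a, b, with h_n := √n − √(n−1), the following identity holds: |√(1 − h_n/√n) · a − √(1 + h_n/√(n−1)) · b|² + h_n (|a|²/√n − |b|²/√(n−1)) = |a − b|². -/

import Mathlib

/-- The key pointwise identity: for every integer `n ≥ 2` and all complex `a`, `b`, with
`h = √n - √(n-1)`,
`|√(1 - h/√n) a - √(1 + h/√(n-1)) b|² + h (|a|²/√n - |b|²/√(n-1)) = |a - b|²`. -/
theorem key_identity (n : ℕ) (hn : 2 ≤ n) (a b : ℂ) :
    ‖((Real.sqrt (1 - (Real.sqrt (n : ℝ) - Real.sqrt ((n : ℝ) - 1)) / Real.sqrt (n : ℝ)) : ℂ)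
            * a
          - (Real.sqrt (1 + (Real.sqrt (n : ℝ) - Real.sqrt ((n : ℝ) - 1))
              / Real.sqrt ((n : ℝ) - 1)) : ℂ) * b)‖ ^ 2
      + (Real.sqrt (n : ℝ) - Real.sqrt ((n : ℝ) - 1))
        * (‖a‖ ^ 2 / Real.sqrt (n : ℝ) - ‖b‖ ^ 2 / Real.sqrt ((n : ℝ) - 1))
      = ‖a - b‖ ^ 2 := by
  have hn2 : (2:ℝ) ≤ (n:ℝ) := by exact_mod_cast hn
  set s := Real.sqrt (n:ℝ) with hsdef
  set t := Real.sqrt ((n:ℝ) - 1) with htdef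
  have hs : 0 < s := Real.sqrt_pos.2 (by linarith)
  have ht : 0 < t := Real.sqrt_pos.2 (by linarith)
  have e1 : 1 - (s - t)/s = t/s := by field_simp; ring
  have e2 : 1 + (s - t)/t = s/t := by field_simp; ring
  rw [e1, e2]
  have hts : (0:ℝ) ≤ t/s := by positivity
  have hst : (0:ℝ) ≤ s/t := by positivity
  set u := Real.sqrt (t/s) with hudef
  set v := Real.sqrt (s/t) with hvdef
  have hu2 : u^2 = t/s := Real.sq_sqrt hts
  have hv2 : v^2 = s/t := Real.sq_sqrt hst
  have huv : u * v = 1 := by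
    rw [hudef, hvdef, ← Real.sqrt_mul hts]
    have : t/s * (s/t) = 1 := by field_simp
    rw [this, Real.sqrt_one]
  simp only [Complex.sq_norm]
  simp only [Complex.normSq_apply, Complex.sub_re, Complex.sub_im, Complex.mul_re,
    Complex.mul_im, Complex.ofReal_re, Complex.ofReal_im]
  have hu2' : u^2 * s = t := by rw [hu2]; field_simp
  have hv2' : v^2 * t = s := by rw [hv2]; field_simp
  field_simp
  linear_combination (a.re^2 + a.im^2) * t * hu2' + (b.re^2 + b.im^2) * s * hv2'
    - 2 * s * t * (a.re * b.re + a.im * b.im) * huv
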